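/- Let n_1,…,n_c, m, m̃ be positive integers, let X_i ∈ ℝ^{n_i×m} for i = 1,…,c, and let X ∈ ℝ^{n×m} (n = n_1+…+n_c) be the matrix obtained by stacking X_1,…,X_c row-wise. Let A ∈ ℝ^{r×m}, and for each i let F_i ∈ ℝ^{m×m̃} have rank m̃, all with the same column space, with rank(A·F_i) = m̃. Let Z ∈ ℝ^{r×m̃} have column space contained in the column space of A·F_1, and for each i let G_i ∈ ℝ^{m̃×m̃} minimize G ↦ ‖Z − A·F_i·G‖_F. Then the row-wise stack of X_1·F_1·G_1, …, X_c·F_c·G_c equals X·(F_1·G_1); that is, the collaborative representation coincides exactly with the centralized dimensionality-reduced representation X·B for B = F_1·G_1, so the error measure Σ_{i=1}^c ‖X_i B − X_i F_i G_i‖_F² is zero. -/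
import Mathlib


/-- Frobenius norm of a real matrix: the square root of the sum of the squares of its entries. -/
noncomputable def frob {r k : ℕ} (M : Matrix (Fin r) (Fin k) ℝ) : ℝ :=
  Real.sqrt (∑ i, ∑ j, (M i j) ^ 2)

lemma frob_eq_zero_iff {r k : ℕ} (M : Matrix (Fin r) (Fin k) ℝ) :
    frob M = 0 ↔ M = 0 := by
  unfold frob
  rw [Real.sqrt_eq_zero (by positivity)]
  constructor
  · intro h
    ext i j
    have h1 := (Finset.sum_eq_zero_iff_of_nonneg (fun i _ => by positivity)).1 h i
      (Finset.mem_univ i)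
    have h2 := (Finset.sum_eq_zero_iff_of_nonneg (fun j _ => by positivity)).1 h1 j
      (Finset.mem_univ j)
    simpa using pow_eq_zero_iff (two_ne_zero) |>.1 h2
  · intro h; subst h; simp

lemma col_mem_range {a b : ℕ} (M : Matrix (Fin a) (Fin b) ℝ) (j : Fin b) :
    (fun k => M k j) ∈ LinearMap.range M.mulVecLin := by
  refine ⟨Pi.single j 1, ?_⟩
  ext k
  simp [Matrix.mulVecLin_apply, Matrix.mulVec_single]

lemma inj_of_rank {a b : ℕ} (M : Matrix (Fin a) (Fin b) ℝ) (h : M.rank = b) :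
    Function.Injective M.mulVecLin := by
  rw [← LinearMap.ker_eq_bot]
  have hrn := M.mulVecLin.finrank_range_add_finrank_ker
  rw [Matrix.rank] at h
  rw [h] at hrn
  simp only [Module.finrank_fintype_fun_eq_card, Fintype.card_fin] at hrn
  have : Module.finrank ℝ (LinearMap.ker M.mulVecLin) = 0 := by omega
  exact Submodule.finrank_eq_zero.mp this

theorem collaborative_equals_centralized
    (c m mt r : ℕ) (hc : 0 < c) (hm : 0 < m) (hmt : 0 < mt)
    (n : Fin c → ℕ) (hn : ∀ i, 0 < n i)
    (X : (i : Fin c) → Matrix (Fin (n i)) (Fin m) ℝ)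
    (A : Matrix (Fin r) (Fin m) ℝ)
    (F : Fin c → Matrix (Fin m) (Fin mt) ℝ)
    (G : Fin c → Matrix (Fin mt) (Fin mt) ℝ)
    (Z : Matrix (Fin r) (Fin mt) ℝ)
    (hrankF : ∀ i, (F i).rank = mt)
    (hrange : ∀ i j, LinearMap.range (F i).mulVecLin = LinearMap.range (F j).mulVecLin)
    (hrankAF : ∀ i, (A * F i).rank = mt)
    (hZ : LinearMap.range Z.mulVecLin ≤ LinearMap.range (A * F ⟨0, hc⟩).mulVecLin)
    (hmin : ∀ i, ∀ G' : Matrix (Fin mt) (Fin mt) ℝ,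
      frob (Z - A * F i * G i) ≤ frob (Z - A * F i * G')) :
    (Matrix.of fun (p : Σ i : Fin c, Fin (n i)) (l : Fin mt) =>
        (X p.1 * (F p.1 * G p.1)) p.2 l)
      = (Matrix.of fun (p : Σ i : Fin c, Fin (n i)) (l : Fin m) => X p.1 p.2 l)
          * (F ⟨0, hc⟩ * G ⟨0, hc⟩)
    ∧ ∑ i, frob (X i * (F ⟨0, hc⟩ * G ⟨0, hc⟩) - X i * (F i * G i)) ^ 2 = 0 := by
  set i0 : Fin c := ⟨0, hc⟩
  -- ranges of A * F i all agree
  have hAFrange : ∀ i, LinearMap.range (A * F i).mulVecLin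
      = LinearMap.range (A * F i0).mulVecLin := by
    intro i
    rw [Matrix.mulVecLin_mul, Matrix.mulVecLin_mul, LinearMap.range_comp,
      LinearMap.range_comp, hrange i i0]
  -- each minimizer achieves Z exactly
  have hAFG : ∀ i, A * F i * G i = Z := by
    intro i
    -- construct G' with A * F i * G' = Z
    have hcol : ∀ j : Fin mt, ∃ g : Fin mt → ℝ,
        (A * F i).mulVec g = fun k => Z k j := by
      intro j
      have := hZ (col_mem_range Z j)
      rw [← hAFrange i] at this
      obtain ⟨g, hg⟩ := this
      exact ⟨g, hg⟩
    choose g hg using hcol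
    set G' : Matrix (Fin mt) (Fin mt) ℝ := Matrix.of fun k j => g j k with hG'
    have hAG' : A * F i * G' = Z := by
      ext p j
      have := congrFun (hg j) p
      simpa [Matrix.mulVec, Matrix.mul_apply, dotProduct, hG'] using this
    have h0 : frob (Z - A * F i * G') = 0 := by
      rw [hAG', sub_self]
      exact (frob_eq_zero_iff 0).mpr rfl
    have hle := hmin i G'
    rw [h0] at hle
    have hz : frob (Z - A * F i * G i) = 0 :=
      le_antisymm hle (Real.sqrt_nonneg _)
    have := (frob_eq_zero_iff _).mp hz
    exact (sub_eq_zero.mp this).symm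
  -- key: F i * G i = F i0 * G i0
  have key : ∀ i, F i * G i = F i0 * G i0 := by
    intro i
    have hA : A * (F i * G i) = A * (F i0 * G i0) := by
      rw [← Matrix.mul_assoc, ← Matrix.mul_assoc, hAFG i, hAFG i0]
    have hinj := inj_of_rank (A * F i0) (hrankAF i0)
    ext k j
    -- the j-th column difference
    have hmem : (fun k => (F i * G i) k j - (F i0 * G i0) k j)
        ∈ LinearMap.range (F i0).mulVecLin := by
      have h1 : (fun k => (F i * G i) k j) ∈ LinearMap.range (F i0).mulVecLin := by
        have := col_mem_range (F i * G i) j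
        rw [Matrix.mulVecLin_mul, LinearMap.range_comp] at this
        obtain ⟨v, hv, hveq⟩ := this
        rw [← hrange i i0]
        exact ⟨v, hveq⟩
      have h2 : (fun k => (F i0 * G i0) k j) ∈ LinearMap.range (F i0).mulVecLin := by
        have := col_mem_range (F i0 * G i0) j
        rw [Matrix.mulVecLin_mul, LinearMap.range_comp] at this
        obtain ⟨v, hv, hveq⟩ := this
        exact ⟨v, hveq⟩
      exact Submodule.sub_mem _ h1 h2
    obtain ⟨v, hv⟩ := hmem
    have hAw : A.mulVec ((F i0).mulVec v) = 0 := by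
      rw [show (F i0).mulVec v = fun k => (F i * G i) k j - (F i0 * G i0) k j from hv]
      ext p
      have := congrFun (congrFun hA p) j
      simp only [Matrix.mul_apply] at this
      simp only [Matrix.mulVec, dotProduct, mul_sub, Finset.sum_sub_distrib,
        Matrix.mul_apply, Pi.zero_apply]
      rw [sub_eq_zero]
      exact this
    have hcomp : (A * F i0).mulVecLin v = 0 := by
      rw [Matrix.mulVecLin_mul]
      simpa [Matrix.mulVecLin_apply] using hAw
    have hv0 : v = 0 := by
      apply hinj
      simpa using hcomp
    rw [hv0, map_zero] at hv
    have h := congrFun hv k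
    simp only [Pi.zero_apply] at h
    linarith
  constructor
  · ext p l
    have hk : (X p.1 * (F p.1 * G p.1)) p.2 l = (X p.1 * (F i0 * G i0)) p.2 l := by
      rw [key p.1]
    simp only [Matrix.of_apply, Matrix.mul_apply] at hk ⊢
    rw [hk]
  · apply Finset.sum_eq_zero
    intro i _
    rw [key i, sub_self, (frob_eq_zero_iff 0).mpr rfl]
    ring
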